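/- Consider the closed-loop system Ṫ̃ = A T̃ − A 𝟙 T̃_sup + B D̃, Ṫ̃_sup = 𝟙^T A^T Z T̃, Ḋ̃ = (𝟙𝟙^T/n − I_n) B^T Z T̃, where A is Hurwitz, Z = Z^T ≻ 0 satisfies A^T Z + Z A = −2 I_n, B = M^{-1} W, and 𝟙^T D̃(0) = 0. Then V_tot(T̃, T̃_sup, D̃) = ½ T̃^T Z T̃ + ½‖T̃_sup‖² + ½‖D̃‖² satisfies d/dt V_tot = −‖T̃‖² ≤ 0 along solutions; in particular all solutions are bounded. -/

import Mathlib

open Matrix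

/-- Derivative of a dot product of two vector-valued curves. -/
lemma hasDerivAt_dotProduct' {n : ℕ} {f g : ℝ → Fin n → ℝ} {f' g' : Fin n → ℝ} {t : ℝ}
    (hf : HasDerivAt f f' t) (hg : HasDerivAt g g' t) :
    HasDerivAt (fun s => f s ⬝ᵥ g s) (f' ⬝ᵥ g t + f t ⬝ᵥ g') t := by
  rw [hasDerivAt_pi] at hf hg
  simp only [dotProduct]
  rw [← Finset.sum_add_distrib]
  exact HasDerivAt.fun_sum fun i _ => (hf i).mul (hg i)

/-- Derivative of a matrix times a vector-valued curve. -/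
lemma hasDerivAt_mulVec' {n : ℕ} (Z : Matrix (Fin n) (Fin n) ℝ) {f : ℝ → Fin n → ℝ}
    {f' : Fin n → ℝ} {t : ℝ} (hf : HasDerivAt f f' t) :
    HasDerivAt (fun s => Z.mulVec (f s)) (Z.mulVec f') t := by
  rw [hasDerivAt_pi] at hf ⊢
  intro i
  simp only [mulVec, dotProduct]
  exact HasDerivAt.fun_sum fun j _ => (hf j).const_mul _

/-- Along solutions of the closed-loop incremental system, the total
storage function `V_tot = ½ T̃ᵀZT̃ + ½T̃_sup² + ½‖D̃‖²` satisfies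
`d/dt V_tot = -‖T̃‖² ≤ 0`; in particular it is nonincreasing (solutions are bounded). -/
theorem stmt14 (n : ℕ) (A B Z M W : Matrix (Fin n) (Fin n) ℝ)
    (mv wv : Fin n → ℝ) (hm : ∀ i, 0 < mv i) (hw : ∀ i, 0 < wv i)
    (hM : M = Matrix.diagonal mv) (hW : W = Matrix.diagonal wv)
    (hB : B = M⁻¹ * W)
    (hHurwitz : ∀ μ ∈ spectrum ℂ (A.map (fun x => (x : ℂ))), μ.re < 0)
    (hZsymm : Z.IsSymm) (hZpos : Z.PosDef)
    (hLyap : Aᵀ * Z + Z * A = (-2 : ℝ) • (1 : Matrix (Fin n) (Fin n) ℝ))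
    (ones : Fin n → ℝ) (hones : ones = fun _ => 1)
    (K : Matrix (Fin n) (Fin n) ℝ)
    (hK : K = (n : ℝ)⁻¹ • Matrix.vecMulVec ones ones - 1)
    (Tt : ℝ → Fin n → ℝ) (st : ℝ → ℝ) (Dt : ℝ → Fin n → ℝ)
    -- closed-loop dynamics
    (hT : ∀ t, HasDerivAt Tt
      (A.mulVec (Tt t) - st t • A.mulVec ones + B.mulVec (Dt t)) t)
    (hst : ∀ t, HasDerivAt st (ones ⬝ᵥ (Aᵀ * Z).mulVec (Tt t)) t)
    (hDt : ∀ t, HasDerivAt Dt ((K * Bᵀ * Z).mulVec (Tt t)) t)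
    (hD0 : ones ⬝ᵥ Dt 0 = 0)
    (Vtot : ℝ → ℝ)
    (hVtot : Vtot = fun t =>
      (1 / 2) * (Tt t ⬝ᵥ Z.mulVec (Tt t)) + (1 / 2) * (st t) ^ 2 +
        (1 / 2) * (Dt t ⬝ᵥ Dt t)) :
    (∀ t, HasDerivAt Vtot (-(Tt t ⬝ᵥ Tt t)) t) ∧
    (∀ t, 0 ≤ t → Vtot t ≤ Vtot 0) := by
  -- symmetry of the Z-weighted pairing
  have hsymm : ∀ x y : Fin n → ℝ, x ⬝ᵥ Z.mulVec y = y ⬝ᵥ Z.mulVec x := by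
    intro x y
    rw [Matrix.dotProduct_mulVec]
    nth_rewrite 1 [← hZsymm.eq]
    rw [Matrix.vecMul_transpose, dotProduct_comm]
  -- Lyapunov identity: T ⬝ Z (A T) = - T ⬝ T
  have hlyap' : ∀ x : Fin n → ℝ, x ⬝ᵥ Z.mulVec (A.mulVec x) = -(x ⬝ᵥ x) := by
    intro x
    have h1 : x ⬝ᵥ ((Aᵀ * Z + Z * A).mulVec x) = -2 * (x ⬝ᵥ x) := by
      rw [hLyap, Matrix.smul_mulVec, Matrix.one_mulVec, dotProduct_smul,
        smul_eq_mul]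
    have h2 : x ⬝ᵥ ((Aᵀ * Z).mulVec x) = x ⬝ᵥ Z.mulVec (A.mulVec x) := by
      rw [← Matrix.mulVec_mulVec, Matrix.dotProduct_mulVec x Aᵀ, Matrix.vecMul_transpose,
        hsymm (A.mulVec x) x]
    rw [Matrix.add_mulVec, dotProduct_add, h2, ← Matrix.mulVec_mulVec] at h1
    linarith [h1]
  -- ones annihilates K from the left
  have hKones : ones ᵥ* K = 0 := by
    funext i
    have hn : (n : ℝ) ≠ 0 := Nat.cast_ne_zero.mpr i.pos.ne'
    rw [hK]
    simp only [Matrix.vecMul, dotProduct, Matrix.sub_apply, Matrix.smul_apply,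
      Matrix.vecMulVec_apply, Matrix.one_apply, Pi.zero_apply, smul_eq_mul, hones, mul_sub,
      mul_ite, mul_one, mul_zero]
    rw [Finset.sum_sub_distrib]
    simp [Finset.sum_ite_eq', hn, mul_comm]
  -- conservation: ones ⬝ Dt t = 0 for all t
  have hcons : ∀ t, ones ⬝ᵥ Dt t = 0 := by
    have hderiv0 : ∀ t, HasDerivAt (fun s => ones ⬝ᵥ Dt s) 0 t := by
      intro t
      have h := hasDerivAt_dotProduct' (hasDerivAt_const t ones) (hDt t)
      have hz : (0 : Fin n → ℝ) ⬝ᵥ Dt t + ones ⬝ᵥ (K * Bᵀ * Z).mulVec (Tt t) = 0 := by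
        rw [zero_dotProduct, Matrix.dotProduct_mulVec]
        have : ones ᵥ* (K * Bᵀ * Z) = 0 := by
          rw [Matrix.mul_assoc, ← Matrix.vecMul_vecMul, ← Matrix.vecMul_vecMul, hKones]
          simp [Matrix.vecMul]
        rw [this, zero_dotProduct, zero_add]
      rwa [hz] at h
    intro t
    have := is_const_of_deriv_eq_zero (f := fun s => ones ⬝ᵥ Dt s)
      (fun s => (hderiv0 s).differentiableAt) (fun s => (hderiv0 s).deriv) t 0
    rw [this, hD0]
  -- main derivative computation
  have hmain : ∀ t, HasDerivAt Vtot (-(Tt t ⬝ᵥ Tt t)) t := by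
    intro t
    set T' : Fin n → ℝ := A.mulVec (Tt t) - st t • A.mulVec ones + B.mulVec (Dt t) with hT'
    have h1 : HasDerivAt (fun s => Tt s ⬝ᵥ Z.mulVec (Tt s))
        (T' ⬝ᵥ Z.mulVec (Tt t) + Tt t ⬝ᵥ Z.mulVec T') t :=
      hasDerivAt_dotProduct' (hT t) (hasDerivAt_mulVec' Z (hT t))
    have h2 : HasDerivAt (fun s => (st s) ^ 2)
        (2 * st t ^ 1 * (ones ⬝ᵥ (Aᵀ * Z).mulVec (Tt t))) t := (hst t).pow 2
    have h3 : HasDerivAt (fun s => Dt s ⬝ᵥ Dt s)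
        ((K * Bᵀ * Z).mulVec (Tt t) ⬝ᵥ Dt t + Dt t ⬝ᵥ (K * Bᵀ * Z).mulVec (Tt t)) t :=
      hasDerivAt_dotProduct' (hDt t) (hDt t)
    have hsum := ((h1.const_mul ((1:ℝ)/2)).add (h2.const_mul ((1:ℝ)/2))).add
      (h3.const_mul ((1:ℝ)/2))
    rw [hVtot]
    convert hsum using 1
    · rfl
    · rfl
    · rfl
    -- Now the algebraic identity
    have e1 : T' ⬝ᵥ Z.mulVec (Tt t) = Tt t ⬝ᵥ Z.mulVec T' := hsymm _ _
    -- expand T ⬝ Z T'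
    have e2 : Tt t ⬝ᵥ Z.mulVec T' =
        -(Tt t ⬝ᵥ Tt t) - st t * (Tt t ⬝ᵥ Z.mulVec (A.mulVec ones))
          + Tt t ⬝ᵥ Z.mulVec (B.mulVec (Dt t)) := by
      rw [hT', Matrix.mulVec_add, Matrix.mulVec_sub, dotProduct_add,
        dotProduct_sub, Matrix.mulVec_smul, dotProduct_smul, hlyap' (Tt t),
        smul_eq_mul]
    -- supply-temperature cross term
    have e3 : ones ⬝ᵥ (Aᵀ * Z).mulVec (Tt t) = Tt t ⬝ᵥ Z.mulVec (A.mulVec ones) := by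
      rw [← Matrix.mulVec_mulVec, Matrix.dotProduct_mulVec ones Aᵀ, Matrix.vecMul_transpose,
        hsymm (A.mulVec ones) (Tt t)]
    -- demand cross term
    have e4 : Dt t ⬝ᵥ (Bᵀ * Z).mulVec (Tt t) = Tt t ⬝ᵥ Z.mulVec (B.mulVec (Dt t)) := by
      rw [← Matrix.mulVec_mulVec, Matrix.dotProduct_mulVec (Dt t) Bᵀ, Matrix.vecMul_transpose,
        hsymm (B.mulVec (Dt t)) (Tt t)]
    have e5 : Dt t ⬝ᵥ (K * Bᵀ * Z).mulVec (Tt t) = -(Dt t ⬝ᵥ (Bᵀ * Z).mulVec (Tt t)) := by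
      rw [Matrix.mul_assoc, ← Matrix.mulVec_mulVec, Matrix.dotProduct_mulVec (Dt t) K]
      have hvK : Dt t ᵥ* K = -(Dt t) := by
        rw [hK, Matrix.vecMul_sub, Matrix.vecMul_one]
        have : Dt t ᵥ* ((n : ℝ)⁻¹ • Matrix.vecMulVec ones ones) = 0 := by
          funext i
          simp only [Matrix.vecMul, dotProduct, Matrix.smul_apply,
            Matrix.vecMulVec_apply, smul_eq_mul, Pi.zero_apply]
          have hsum0 : ∑ j, Dt t j * ((n:ℝ)⁻¹ * (ones j * ones i)) =
              (n:ℝ)⁻¹ * ones i * (ones ⬝ᵥ Dt t) := by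
            rw [dotProduct, Finset.mul_sum]
            exact Finset.sum_congr rfl fun j _ => by rw [hones]; ring
          rw [hsum0, hcons t, mul_zero]
        rw [this, zero_sub]
      rw [hvK, neg_dotProduct, Matrix.dotProduct_mulVec]

    have e6 : (K * Bᵀ * Z).mulVec (Tt t) ⬝ᵥ Dt t = Dt t ⬝ᵥ (K * Bᵀ * Z).mulVec (Tt t) :=
      dotProduct_comm _ _
    rw [e1, e2, e3, e6, e5, ← e4]
    ring
  refine ⟨hmain, fun t ht => ?_⟩
  have hanti : Antitone Vtot := by
    apply antitone_of_deriv_nonpos (fun s => (hmain s).differentiableAt)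
    intro s
    rw [(hmain s).deriv]
    have : 0 ≤ Tt s ⬝ᵥ Tt s :=
      Finset.sum_nonneg fun i _ => mul_self_nonneg _
    linarith
  exact hanti ht
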